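/- Let (M_n)_{n∈ℕ} be invertible (d+1)×(d+1) matrices with nonnegative entries, let v ∈ ℝ^{d+1} with ‖v‖₁ = 1 be such that ⋂_{n∈ℕ} M_{[0,n)}(ℝ_{≥0}^{d+1}) = {t·v : t ≥ 0}, and let E be a hyperplane (codimension-1 subspace) of the dual space (ℝ^{d+1})*. Suppose there exist real numbers θ₁ > θ₂ such that: (i) for every φ ∈ E, limsup_{n→∞} (1/n)·ln ‖φ M_{[0,n)}‖_∞ ≤ θ₂, and (ii) for every φ ∉ E, liminf_{n→∞} (1/n)·ln ‖φ M_{[0,n)}‖_∞ ≥ θ₁. Then E = v° = {φ ∈ (ℝ^{d+1})* : φ(v) = 0}. -/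

import Mathlib

/-- `prodMR M k n = M_k * M_{k+1} * ⋯ * M_{n-1}` (the identity when `n ≤ k`). -/
def prodMR {d : ℕ} (M : ℕ → Matrix (Fin (d + 1)) (Fin (d + 1)) ℝ) (k n : ℕ) :
    Matrix (Fin (d + 1)) (Fin (d + 1)) ℝ :=
  ((List.range' k (n - k)).map M).prod

/-- The sup norm `‖z‖_∞ = max_i |z i|`. -/
noncomputable def normInf {d : ℕ} (z : Fin (d + 1) → ℝ) : ℝ :=
  ⨆ i, |z i|

section Aux

variable {d : ℕ} (M : ℕ → Matrix (Fin (d + 1)) (Fin (d + 1)) ℝ)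

lemma prodMR_zero : prodMR M 0 0 = 1 := by simp [prodMR]

lemma prodMR_succ (n : ℕ) : prodMR M 0 (n + 1) = prodMR M 0 n * M n := by
  simp [prodMR, List.range'_concat]

lemma prodMR_nonneg (hpos : ∀ n i j, 0 ≤ M n i j) (n : ℕ) (i j : Fin (d+1)) :
    0 ≤ prodMR M 0 n i j := by
  induction n generalizing i j with
  | zero => simp [prodMR_zero, Matrix.one_apply]; positivity
  | succ n ih =>
    rw [prodMR_succ, Matrix.mul_apply]
    exact Finset.sum_nonneg fun k _ => mul_nonneg (ih i k) (hpos n k j)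

lemma prodMR_isUnit (hinv : ∀ n, IsUnit (M n).det) (n : ℕ) :
    IsUnit (prodMR M 0 n).det := by
  induction n with
  | zero => simp [prodMR_zero]
  | succ n ih => rw [prodMR_succ, Matrix.det_mul]; exact ih.mul (hinv n)

lemma abs_le_normInf (z : Fin (d+1) → ℝ) (i : Fin (d+1)) : |z i| ≤ normInf z :=
  le_ciSup (f := fun i => |z i|) (Set.Finite.bddAbove (Set.finite_range _)) i

lemma normInf_nonneg (z : Fin (d+1) → ℝ) : 0 ≤ normInf z :=
  le_trans (abs_nonneg (z 0)) (abs_le_normInf z 0)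

lemma normInf_le (z : Fin (d+1) → ℝ) {c : ℝ} (h : ∀ i, |z i| ≤ c) : normInf z ≤ c :=
  ciSup_le h

lemma normInf_pos (z : Fin (d+1) → ℝ) (hz : z ≠ 0) : 0 < normInf z := by
  obtain ⟨i, hi⟩ := Function.ne_iff.mp hz
  exact lt_of_lt_of_le (abs_pos.mpr hi) (abs_le_normInf z i)

def Cset (n : ℕ) : Set (Fin (d+1) → ℝ) :=
  (fun z => (prodMR M 0 n).mulVec z) '' {z : Fin (d + 1) → ℝ | ∀ i, 0 ≤ z i}

lemma mem_Cset_iff (hinv : ∀ n, IsUnit (M n).det) (n : ℕ) (w : Fin (d+1) → ℝ) :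
    w ∈ Cset M n ↔ ∀ i, 0 ≤ ((prodMR M 0 n)⁻¹.mulVec w) i := by
  constructor
  · rintro ⟨z, hz, rfl⟩
    rw [Matrix.mulVec_mulVec, Matrix.nonsing_inv_mul _ (prodMR_isUnit M hinv n),
      Matrix.one_mulVec]
    exact hz
  · intro h
    refine ⟨(prodMR M 0 n)⁻¹.mulVec w, h, ?_⟩
    show (prodMR M 0 n).mulVec ((prodMR M 0 n)⁻¹.mulVec w) = w
    rw [Matrix.mulVec_mulVec, Matrix.mul_nonsing_inv _ (prodMR_isUnit M hinv n),
      Matrix.one_mulVec]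

lemma Cset_closed (hinv : ∀ n, IsUnit (M n).det) (n : ℕ) : IsClosed (Cset M n) := by
  have : Cset M n = (fun w => (prodMR M 0 n)⁻¹.mulVec w) ⁻¹'
      {z : Fin (d + 1) → ℝ | ∀ i, 0 ≤ z i} := by
    ext w; exact mem_Cset_iff M hinv n w
  rw [this]
  have hc : Continuous fun w : Fin (d+1) → ℝ => (prodMR M 0 n)⁻¹.mulVec w :=
    LinearMap.continuous_of_finiteDimensional ((prodMR M 0 n)⁻¹.mulVecLin)
  refine IsClosed.preimage hc ?_
  have : {z : Fin (d + 1) → ℝ | ∀ i, 0 ≤ z i} = ⋂ i, {z : Fin (d+1) → ℝ | 0 ≤ z i} := by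
    ext z; simp [Set.mem_iInter]
  rw [this]
  exact isClosed_iInter fun i => isClosed_le continuous_const (continuous_apply i)

lemma Cset_antitone (hpos : ∀ n i j, 0 ≤ M n i j) : Antitone (Cset M) := by
  refine antitone_nat_of_succ_le fun n => ?_
  rintro w ⟨z, hz, rfl⟩
  refine ⟨(M n).mulVec z, fun i => ?_, ?_⟩
  · simp only [Matrix.mulVec, dotProduct]
    exact Finset.sum_nonneg fun j _ => mul_nonneg (hpos n i j) (hz j)
  · simp [prodMR_succ, Matrix.mulVec_mulVec]

lemma Cset_subset_orthant (hpos : ∀ n i j, 0 ≤ M n i j) (n : ℕ) :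
    Cset M n ⊆ {z : Fin (d + 1) → ℝ | ∀ i, 0 ≤ z i} := by
  rintro w ⟨z, hz, rfl⟩ i
  simp only [Matrix.mulVec, dotProduct, Set.mem_setOf_eq]
  exact Finset.sum_nonneg fun j _ => mul_nonneg (prodMR_nonneg M hpos n i j) (hz j)

lemma smul_mem_Cset (n : ℕ) {t : ℝ} (ht : 0 ≤ t) {w : Fin (d+1) → ℝ}
    (hw : w ∈ Cset M n) : t • w ∈ Cset M n := by
  obtain ⟨z, hz, rfl⟩ := hw
  exact ⟨t • z, fun i => mul_nonneg ht (hz i), by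
    show (prodMR M 0 n).mulVec (t • z) = t • (prodMR M 0 n).mulVec z
    rw [Matrix.mulVec_smul]⟩

lemma col_mem_Cset (n : ℕ) (j : Fin (d+1)) :
    (fun i => prodMR M 0 n i j) ∈ Cset M n := by
  refine ⟨Pi.single j 1, fun i => ?_, ?_⟩
  · rw [Pi.single_apply]; split <;> norm_num
  · show (prodMR M 0 n).mulVec (Pi.single j 1) = _
    ext i; simp [Matrix.mulVec_single]

lemma colsum_pos (hpos : ∀ n i j, 0 ≤ M n i j) (hinv : ∀ n, IsUnit (M n).det)
    (n : ℕ) (j : Fin (d+1)) : 0 < ∑ i, prodMR M 0 n i j := by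
  rcases (Finset.sum_nonneg fun i _ => prodMR_nonneg M hpos n i j).lt_or_eq with h | h
  · exact h
  · exfalso
    have hz : ∀ i, prodMR M 0 n i j = 0 := by
      intro i
      have := (Finset.sum_eq_zero_iff_of_nonneg
        (fun i _ => prodMR_nonneg M hpos n i j)).mp h.symm
      exact this i (Finset.mem_univ i)
    have hcol : (prodMR M 0 n).mulVec (Pi.single j 1) = 0 := by
      ext i; simp [Matrix.mulVec_single, hz i]
    have : (Pi.single j 1 : Fin (d+1) → ℝ) = 0 := by
      have h1 : (prodMR M 0 n)⁻¹.mulVec ((prodMR M 0 n).mulVec (Pi.single j 1))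
          = Pi.single j 1 := by
        rw [Matrix.mulVec_mulVec, Matrix.nonsing_inv_mul _ (prodMR_isUnit M hinv n),
          Matrix.one_mulVec]
      rw [hcol] at h1
      rw [← h1, Matrix.mulVec_zero]
    have := congrFun this j
    simp at this

lemma eventually_sep (hpos : ∀ n i j, 0 ≤ M n i j) (hinv : ∀ n, IsUnit (M n).det)
    (v : Fin (d+1) → ℝ) (hv : ∀ n, v ∈ Cset M n) (hvs : ∑ i, v i = 1)
    (hray : (⋂ n, Cset M n) = {w | ∃ t : ℝ, 0 ≤ t ∧ w = t • v})
    (φ : Fin (d+1) → ℝ) (hφv : 0 < dotProduct φ v) :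
    ∃ N : ℕ, ∀ n ≥ N, ∀ u ∈ Cset M n, (∑ i, u i) = 1 →
      dotProduct φ v / 2 < dotProduct φ u := by
  set c := dotProduct φ v with hc
  have hcont : Continuous fun u : Fin (d+1) → ℝ => dotProduct φ u := by
    simp only [dotProduct]
    exact continuous_finset_sum _ fun i _ => continuous_const.mul (continuous_apply i)
  set A : ℕ → Set (Fin (d+1) → ℝ) :=
    fun n => Cset M n ∩ stdSimplex ℝ (Fin (d+1)) ∩ {u | dotProduct φ u ≤ c / 2}
    with hA
  have hAanti : Antitone A := fun m n hmn =>
    Set.inter_subset_inter_left _ (Set.inter_subset_inter_left _ (Cset_antitone M hpos hmn))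
  have hAclosed : ∀ n, IsClosed (A n) :=
    fun n => (((Cset_closed M hinv n).inter (isClosed_stdSimplex ℝ _)).inter
      (isClosed_le hcont continuous_const))
  have hAcompact : ∀ n, IsCompact (A n) := fun n =>
    (isCompact_stdSimplex ℝ (Fin (d+1))).of_isClosed_subset (hAclosed n)
      (fun u hu => hu.1.2)
  by_contra hcon
  push_neg at hcon
  have hAne : ∀ n, (A n).Nonempty := by
    intro n
    obtain ⟨m, hmn, u, hu, hus, hule⟩ := hcon n
    exact ⟨u, hAanti hmn ⟨⟨hu, Cset_subset_orthant M hpos m hu, hus⟩, hule⟩⟩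
  obtain ⟨u, hu⟩ := IsCompact.nonempty_iInter_of_directed_nonempty_isCompact_isClosed
    A hAanti.directed_ge hAne hAcompact hAclosed
  have huC : u ∈ ⋂ n, Cset M n := Set.mem_iInter.mpr fun n => (Set.mem_iInter.mp hu n).1.1
  rw [hray] at huC
  obtain ⟨t, ht, rfl⟩ := huC
  have hus : ∑ i, t * v i = 1 := (Set.mem_iInter.mp hu 0).1.2.2
  have : t = 1 := by
    rw [← Finset.mul_sum, hvs, mul_one] at hus; exact hus
  subst this
  have hle : dotProduct φ ((1:ℝ) • v) ≤ c / 2 := (Set.mem_iInter.mp hu 0).2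
  rw [one_smul] at hle
  rw [← hc] at hle
  linarith

lemma normInf_vecMul_comparison (hpos : ∀ n i j, 0 ≤ M n i j)
    (hinv : ∀ n, IsUnit (M n).det)
    (φ ψ : Fin (d+1) → ℝ) {c : ℝ} (hc : 0 < c) (n : ℕ)
    (hsep : ∀ u ∈ Cset M n, (∑ i, u i) = 1 → c / 2 < dotProduct φ u) :
    normInf (Matrix.vecMul ψ (prodMR M 0 n)) ≤
      normInf ψ * (2 / c) * normInf (Matrix.vecMul φ (prodMR M 0 n)) := by
  set P := prodMR M 0 n with hP
  have hsum : ∀ j, 0 < ∑ i, P i j := colsum_pos M hpos hinv n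
  have hcol : ∀ j : Fin (d+1), (c/2) * (∑ i, P i j) < Matrix.vecMul φ P j := by
    intro j
    have hu : (∑ i, P i j)⁻¹ • (fun i => P i j) ∈ Cset M n :=
      smul_mem_Cset M n (le_of_lt (inv_pos.mpr (hsum j))) (col_mem_Cset M n j)
    have hus : (∑ i, ((∑ i, P i j)⁻¹ • (fun i => P i j)) i) = 1 := by
      simp only [Pi.smul_apply, smul_eq_mul, ← Finset.mul_sum]
      exact inv_mul_cancel₀ (hsum j).ne'
    have hlt := hsep _ hu hus
    have hdot : dotProduct φ ((∑ i, P i j)⁻¹ • (fun i => P i j))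
        = Matrix.vecMul φ P j / (∑ i, P i j) := by
      simp only [dotProduct, Matrix.vecMul, Pi.smul_apply, smul_eq_mul,
        div_eq_inv_mul, Finset.mul_sum]
      exact Finset.sum_congr rfl fun i _ => by ring
    rw [hdot] at hlt
    exact (lt_div_iff₀ (hsum j)).mp hlt
  have hsle : ∀ j, (∑ i, P i j) ≤ (2/c) * normInf (Matrix.vecMul φ P) := by
    intro j
    have h1 : (c/2) * (∑ i, P i j) ≤ normInf (Matrix.vecMul φ P) :=
      (hcol j).le.trans ((le_abs_self _).trans (abs_le_normInf _ j))
    rw [div_mul_eq_mul_div, div_le_iff₀ (by norm_num : (0:ℝ) < 2)] at h1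
    rw [div_mul_eq_mul_div, le_div_iff₀ hc]
    linarith
  refine normInf_le _ fun j => ?_
  have habs : |Matrix.vecMul ψ P j| ≤ normInf ψ * (∑ i, P i j) := by
    simp only [Matrix.vecMul, dotProduct]
    calc |∑ i, ψ i * P i j| ≤ ∑ i, |ψ i * P i j| := Finset.abs_sum_le_sum_abs _ _
      _ ≤ ∑ i, normInf ψ * P i j := by
          refine Finset.sum_le_sum fun i _ => ?_
          rw [abs_mul, abs_of_nonneg (prodMR_nonneg M hpos n i j)]
          exact mul_le_mul_of_nonneg_right (abs_le_normInf ψ i)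
            (prodMR_nonneg M hpos n i j)
      _ = normInf ψ * (∑ i, P i j) := by rw [Finset.mul_sum]
  calc |Matrix.vecMul ψ P j| ≤ normInf ψ * (∑ i, P i j) := habs
    _ ≤ normInf ψ * ((2/c) * normInf (Matrix.vecMul φ P)) :=
        mul_le_mul_of_nonneg_left (hsle j) (normInf_nonneg ψ)
    _ = normInf ψ * (2/c) * normInf (Matrix.vecMul φ P) := by ring

lemma vecMul_ne_zero (hinv : ∀ n, IsUnit (M n).det) (n : ℕ) {ψ : Fin (d+1) → ℝ}
    (hψ : ψ ≠ 0) : Matrix.vecMul ψ (prodMR M 0 n) ≠ 0 := by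
  intro h
  apply hψ
  have h2 := congrArg (fun z => Matrix.vecMul z (prodMR M 0 n)⁻¹) h
  simp only [Matrix.vecMul_vecMul, Matrix.zero_vecMul] at h2
  rwa [Matrix.mul_nonsing_inv _ (prodMR_isUnit M hinv n), Matrix.vecMul_one] at h2

theorem second_space_is_annihilator' {d : ℕ} (hd : 1 ≤ d)
    (M : ℕ → Matrix (Fin (d + 1)) (Fin (d + 1)) ℝ)
    (hinv : ∀ n, IsUnit (M n).det)
    (hpos : ∀ n i j, 0 ≤ M n i j)
    (v : Fin (d + 1) → ℝ) (hv1 : (∑ i, |v i|) = 1)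
    (hcone : (⋂ n : ℕ, (fun z => (prodMR M 0 n).mulVec z) ''
        {z : Fin (d + 1) → ℝ | ∀ i, 0 ≤ z i}) = {w | ∃ t : ℝ, 0 ≤ t ∧ w = t • v})
    (E : Submodule ℝ (Fin (d + 1) → ℝ))
    (hE : Module.finrank ℝ E = d)
    (θ₁ θ₂ : ℝ) (hθ : θ₂ < θ₁)
    (h1 : ∀ φ : Fin (d + 1) → ℝ, φ ∈ E → φ ≠ 0 →
      Filter.limsup (fun n : ℕ =>
          (((n : ℝ)⁻¹ * Real.log (normInf (Matrix.vecMul φ (prodMR M 0 n))) : ℝ) :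
            EReal)) Filter.atTop ≤ (θ₂ : EReal))
    (h2 : ∀ φ : Fin (d + 1) → ℝ, φ ∉ E →
      (θ₁ : EReal) ≤ Filter.liminf (fun n : ℕ =>
          (((n : ℝ)⁻¹ * Real.log (normInf (Matrix.vecMul φ (prodMR M 0 n))) : ℝ) :
            EReal)) Filter.atTop) :
    ∀ φ : Fin (d + 1) → ℝ, φ ∈ E ↔ dotProduct φ v = 0 := by
  classical
  have hcone' : (⋂ n : ℕ, Cset M n) = {w | ∃ t : ℝ, 0 ≤ t ∧ w = t • v} := hcone
  have hvC : ∀ n, v ∈ Cset M n := by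
    intro n
    have hv : v ∈ {w | ∃ t : ℝ, 0 ≤ t ∧ w = t • v} := ⟨1, zero_le_one, (one_smul ℝ v).symm⟩
    rw [← hcone'] at hv
    exact Set.mem_iInter.mp hv n
  have hv0 : ∀ i, 0 ≤ v i := Cset_subset_orthant M hpos 0 (hvC 0)
  have hvs : ∑ i, v i = 1 :=
    (Finset.sum_congr rfl fun i _ => (abs_of_nonneg (hv0 i)).symm).trans hv1
  have hvne : v ≠ 0 := by
    intro h; rw [h] at hv1; simp at hv1
  have hEne : E ≠ ⊤ := by
    intro h
    rw [h, finrank_top, Module.finrank_fin_fun] at hE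
    omega
  obtain ⟨ψ, hψE⟩ : ∃ ψ, ψ ∉ E := by
    by_contra h; push_neg at h; exact hEne (Submodule.eq_top_iff'.mpr h)
  have hψne : ψ ≠ 0 := fun h => hψE (h ▸ E.zero_mem)
  have main : ∀ φ, φ ∈ E → 0 < dotProduct φ v → False := by
    intro φ hφE hφv
    have hφne : φ ≠ 0 := by
      rintro rfl; rw [zero_dotProduct] at hφv; exact lt_irrefl 0 hφv
    obtain ⟨N, hN⟩ := eventually_sep M hpos hinv v hvC hvs hcone' φ hφv
    set K := normInf ψ * (2 / dotProduct φ v) with hK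
    have hKpos : 0 < K := mul_pos (normInf_pos ψ hψne) (by positivity)
    have hcomp : ∀ n ≥ N, normInf (Matrix.vecMul ψ (prodMR M 0 n)) ≤
        K * normInf (Matrix.vecMul φ (prodMR M 0 n)) := fun n hn =>
      normInf_vecMul_comparison M hpos hinv φ ψ hφv n (hN n hn)
    have hψpos : ∀ n : ℕ, 0 < normInf (Matrix.vecMul ψ (prodMR M 0 n)) :=
      fun n => normInf_pos _ (vecMul_ne_zero M hinv n hψne)
    have hφpos : ∀ n ≥ N, 0 < normInf (Matrix.vecMul φ (prodMR M 0 n)) := by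
      intro n hn
      rcases (normInf_nonneg (Matrix.vecMul φ (prodMR M 0 n))).lt_or_eq with h | h
      · exact h
      · exfalso; have := hcomp n hn; rw [← h] at this
        nlinarith [hψpos n]
    set ε := (θ₁ - θ₂)/3 with hε
    have hεpos : 0 < ε := by rw [hε]; linarith
    have hgev : ∀ᶠ n : ℕ in Filter.atTop,
        ((θ₁ - ε : ℝ) : EReal) <
          (((n : ℝ)⁻¹ * Real.log (normInf (Matrix.vecMul ψ (prodMR M 0 n))) : ℝ) :
            EReal) := by
      refine Filter.eventually_lt_of_lt_liminf (lt_of_lt_of_le ?_ (h2 ψ hψE))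
      exact_mod_cast (by linarith : θ₁ - ε < θ₁)
    have hkev : ∀ᶠ n : ℕ in Filter.atTop, |Real.log K / (n : ℝ)| < ε := by
      have ht := (tendsto_const_div_atTop_nhds_zero_nat (Real.log K)).abs
      rw [abs_zero] at ht
      exact ht.eventually_lt_const hεpos
    have hfev : ∀ᶠ n : ℕ in Filter.atTop,
        ((θ₁ - 2*ε : ℝ) : EReal) ≤
          (((n : ℝ)⁻¹ * Real.log (normInf (Matrix.vecMul φ (prodMR M 0 n))) : ℝ) :
            EReal) := by
      filter_upwards [hgev, hkev, Filter.eventually_ge_atTop N,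
        Filter.eventually_ge_atTop 1] with n ha hb hc' hd'
      rw [EReal.coe_le_coe_iff]
      rw [EReal.coe_lt_coe_iff] at ha
      have hnpos : (0:ℝ) < (n:ℝ) := by exact_mod_cast hd'
      have hlog : Real.log (normInf (Matrix.vecMul ψ (prodMR M 0 n))) ≤
          Real.log K + Real.log (normInf (Matrix.vecMul φ (prodMR M 0 n))) := by
        rw [← Real.log_mul hKpos.ne' (hφpos n hc').ne']
        exact Real.log_le_log (hψpos n) (hcomp n hc')
      have h5 : (n:ℝ)⁻¹ * Real.log (normInf (Matrix.vecMul ψ (prodMR M 0 n))) ≤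
          (n:ℝ)⁻¹ * Real.log K +
            (n:ℝ)⁻¹ * Real.log (normInf (Matrix.vecMul φ (prodMR M 0 n))) := by
        rw [← mul_add]
        exact mul_le_mul_of_nonneg_left hlog (by positivity)
      have h6 : (n:ℝ)⁻¹ * Real.log K < ε := by
        rw [abs_lt] at hb
        rw [inv_mul_eq_div]; exact hb.2
      linarith
    have hchain : ((θ₁ - 2*ε : ℝ) : EReal) ≤ (θ₂ : EReal) := by
      refine le_trans (le_trans (Filter.le_liminf_of_le ?_ hfev)
        Filter.liminf_le_limsup) (h1 φ hφE hφne)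
      isBoundedDefault
    rw [EReal.coe_le_coe_iff] at hchain
    rw [hε] at hchain
    linarith
  have hkey : ∀ φ ∈ E, dotProduct φ v = 0 := by
    intro φ hφ
    by_contra hne
    rcases (Ne.lt_or_gt hne) with h | h
    · exact main (-φ) (E.neg_mem hφ) (by rwa [neg_dotProduct, neg_pos])
    · exact main φ hφ h
  let f : (Fin (d+1) → ℝ) →ₗ[ℝ] ℝ :=
    { toFun := fun φ => dotProduct φ v
      map_add' := fun x y => add_dotProduct x y v
      map_smul' := fun c x => by simp [smul_dotProduct] }
  have hvv : dotProduct v v ≠ 0 := fun h => hvne (dotProduct_self_eq_zero.mp h)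
  have hfsurj : Function.Surjective f := by
    intro r
    refine ⟨(r / dotProduct v v) • v, ?_⟩
    show dotProduct ((r / dotProduct v v) • v) v = r
    rw [smul_dotProduct, smul_eq_mul, div_mul_cancel₀ _ hvv]
  have hrank : Module.finrank ℝ (LinearMap.ker f) = d := by
    have h := LinearMap.finrank_range_add_finrank_ker f
    rw [LinearMap.range_eq_top.mpr hfsurj, finrank_top, Module.finrank_self,
      Module.finrank_fin_fun] at h
    omega
  have hEf : E = LinearMap.ker f :=
    Submodule.eq_of_le_of_finrank_eq
      (fun φ hφ => LinearMap.mem_ker.mpr (hkey φ hφ)) (by rw [hE, hrank])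
  intro φ
  rw [hEf]
  exact LinearMap.mem_ker

end Aux

/-- If the nested images of the positive orthant intersect in the ray of `v`, and `E`
is a hyperplane of the dual space (identified with row vectors) on which the cocycle
contracts at rate at most `θ₂` while expanding at rate at least `θ₁ > θ₂` outside of
`E`, then `E = v° = {φ | φ(v) = 0}`. -/
theorem second_space_is_annihilator {d : ℕ} (hd : 1 ≤ d)
    (M : ℕ → Matrix (Fin (d + 1)) (Fin (d + 1)) ℝ)
    (hinv : ∀ n, IsUnit (M n).det)
    (hpos : ∀ n i j, 0 ≤ M n i j)
    (v : Fin (d + 1) → ℝ) (hv1 : (∑ i, |v i|) = 1)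
    (hcone : (⋂ n : ℕ, (fun z => (prodMR M 0 n).mulVec z) ''
        {z : Fin (d + 1) → ℝ | ∀ i, 0 ≤ z i}) = {w | ∃ t : ℝ, 0 ≤ t ∧ w = t • v})
    (E : Submodule ℝ (Fin (d + 1) → ℝ))
    (hE : Module.finrank ℝ E = d)
    (θ₁ θ₂ : ℝ) (hθ : θ₂ < θ₁)
    (h1 : ∀ φ : Fin (d + 1) → ℝ, φ ∈ E → φ ≠ 0 →
      Filter.limsup (fun n : ℕ =>
          (((n : ℝ)⁻¹ * Real.log (normInf (Matrix.vecMul φ (prodMR M 0 n))) : ℝ) :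
            EReal)) Filter.atTop ≤ (θ₂ : EReal))
    (h2 : ∀ φ : Fin (d + 1) → ℝ, φ ∉ E →
      (θ₁ : EReal) ≤ Filter.liminf (fun n : ℕ =>
          (((n : ℝ)⁻¹ * Real.log (normInf (Matrix.vecMul φ (prodMR M 0 n))) : ℝ) :
            EReal)) Filter.atTop) :
    ∀ φ : Fin (d + 1) → ℝ, φ ∈ E ↔ dotProduct φ v = 0 :=
  second_space_is_annihilator' hd M hinv hpos v hv1 hcone E hE θ₁ θ₂ hθ h1 h2
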